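/- arXiv:1107.2636 — 2 statements merged into one kernel-verified Lean document; each statement's English description precedes it below -/
import Mathlib

section
/- For n ≥ 1, every tiling of [0,1]^2 by dyadic tiles of order n either is the union of a tiling of the horizontal rectangle [0,1] × [0,1/2] and a tiling of [0,1] × [1/2,1], or is the union of a tiling of the vertical rectangle [0,1/2] × [0,1] and a tiling of [1/2,1] × [0,1]. -/
open Set Filter Topology

noncomputable section

/-- The dyadic tile `[a/2^i, (a+1)/2^i] × [b/2^j, (b+1)/2^j]` as a subset of `ℝ × ℝ`. -/
def dyadicTile (i j a b : ℕ) : Set (ℝ × ℝ) :=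
  Set.Icc ((a : ℝ) / 2 ^ i) (((a : ℝ) + 1) / 2 ^ i) ×ˢ
    Set.Icc ((b : ℝ) / 2 ^ j) (((b : ℝ) + 1) / 2 ^ j)

/-- `t` is a dyadic tile of order `n` contained in the unit square. -/
def IsDyadicTile (n : ℕ) (t : Set (ℝ × ℝ)) : Prop :=
  ∃ i j a b : ℕ, i + j = n ∧ a < 2 ^ i ∧ b < 2 ^ j ∧ t = dyadicTile i j a b

/-- `F` is a tiling of the region `R` by dyadic tiles of order `n`:
a set of order-`n` tiles whose union is `R` and whose interiors are pairwise disjoint. -/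
def IsTiling (n : ℕ) (F : Set (Set (ℝ × ℝ))) (R : Set (ℝ × ℝ)) : Prop :=
  (∀ t ∈ F, IsDyadicTile n t) ∧ ⋃₀ F = R ∧
    F.Pairwise fun s t => interior s ∩ interior t = ∅

def unitSquare : Set (ℝ × ℝ) := Set.Icc (0 : ℝ) 1 ×ˢ Set.Icc (0 : ℝ) 1



lemma two_pow_le {m k : ℕ} (h : m ≤ k) : (2:ℝ)^m ≤ 2^k := pow_le_pow_right₀ one_le_two h
lemma segX {i a : ℕ} (ha : a < 2 ^ i) :
    Icc ((a:ℝ)/2^i) (((a:ℝ)+1)/2^i) ⊆ Icc 0 1 := by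
  apply Icc_subset_Icc (by positivity)
  rw [div_le_one (by positivity)]
  have : (a:ℝ) + 1 ≤ (2:ℝ)^i := by exact_mod_cast Nat.succ_le_of_lt ha
  linarith
lemma segLow {j b : ℕ} (h : 2*(b+1) ≤ 2^j) :
    Icc ((b:ℝ)/2^j) (((b:ℝ)+1)/2^j) ⊆ Icc 0 (1/2) := by
  apply Icc_subset_Icc (by positivity)
  rw [div_le_iff₀ (by positivity)]
  have : 2*((b:ℝ)+1) ≤ 2^j := by exact_mod_cast h
  linarith
lemma segHigh {j b : ℕ} (hb : b < 2^j) (h : 2^j ≤ 2*b) :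
    Icc ((b:ℝ)/2^j) (((b:ℝ)+1)/2^j) ⊆ Icc (1/2) 1 := by
  apply Icc_subset_Icc
  · rw [le_div_iff₀ (by positivity)]
    have : (2:ℝ)^j ≤ 2*(b:ℝ) := by exact_mod_cast h
    linarith
  · rw [div_le_one (by positivity)]
    have : (b:ℝ) + 1 ≤ (2:ℝ)^j := by exact_mod_cast Nat.succ_le_of_lt hb
    linarith

/-- every point of the bottom half is covered by a tile lying in the bottom half -/
lemma cover_bottom {n : ℕ} (hn : 1 ≤ n) {F : Set (Set (ℝ × ℝ))}
    (hUF : ⋃₀ F = unitSquare)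
    (hj : ∀ t ∈ F, ∃ i j a b : ℕ, i + j = n ∧ a < 2^i ∧ b < 2^j ∧ 1 ≤ j ∧ t = dyadicTile i j a b)
    {x y : ℝ} (hx : x ∈ Icc (0:ℝ) 1) (hy0 : 0 ≤ y) (hy2 : y ≤ 1/2) :
    ∃ t ∈ F, (t ⊆ Icc (0:ℝ) 1 ×ˢ Icc (0:ℝ) (1/2)) ∧ (x, y) ∈ t := by
  have h2n : (0:ℝ) < 2 ^ n := by positivity
  set ε : ℝ := 1 / 2 ^ (n+1) with hε
  have hεpos : 0 < ε := by positivity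
  have hε4 : ε ≤ 1/4 := by
    rw [hε, div_le_div_iff₀ (by positivity) (by norm_num)]
    have h4 : (2:ℝ)^2 ≤ 2^(n+1) := two_pow_le (by omega)
    norm_num at h4 ⊢
    linarith
  set y' := min y (1/2 - ε) with hy'
  have hy'0 : 0 ≤ y' := le_min hy0 (by linarith)
  have hy'lt : y' < 1/2 := lt_of_le_of_lt (min_le_right _ _) (by linarith)
  have hy'y : y' ≤ y := min_le_left _ _
  have hmem : (x, y') ∈ ⋃₀ F := by
    rw [hUF]
    exact ⟨hx, hy'0, by linarith⟩
  obtain ⟨t, htF, htm⟩ := hmem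
  obtain ⟨i, j, a, b, hij, ha, hb, hj1, rfl⟩ := hj t htF
  have hxm : x ∈ Icc ((a:ℝ)/2^i) (((a:ℝ)+1)/2^i) := htm.1
  have hb1 : (b:ℝ)/2^j ≤ y' := htm.2.1
  have hb2 : y' ≤ ((b:ℝ)+1)/2^j := htm.2.2
  have hjn : j ≤ n := by omega
  obtain ⟨j', rfl⟩ : ∃ j', j = j' + 1 := ⟨j - 1, by omega⟩
  have h2j : (2:ℕ)^(j'+1) = 2 * 2^j' := by ring
  have h2jr : (0:ℝ) < 2 ^ (j'+1) := by positivity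
  have hA : 2*(b+1) ≤ 2^(j'+1) := by
    have hlt : (b:ℝ)/2^(j'+1) < 1/2 := lt_of_le_of_lt hb1 hy'lt
    rw [div_lt_iff₀ h2jr] at hlt
    have hnat : 2*b < 2^(j'+1) := by
      have : 2*(b:ℝ) < 2^(j'+1) := by linarith
      exact_mod_cast this
    omega
  have hsub : dyadicTile i (j'+1) a b ⊆ Icc (0:ℝ) 1 ×ˢ Icc (0:ℝ) (1/2) := by
    rw [dyadicTile]; exact Set.prod_mono (segX ha) (segLow hA)
  refine ⟨_, htF, hsub, hxm, le_trans hb1 hy'y, ?_⟩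
  by_cases hyc : y ≤ 1/2 - ε
  · have hyy : y' = y := min_eq_left hyc
    rw [hyy] at hb2; exact hb2
  · push_neg at hyc
    have hy'eq : y' = 1/2 - ε := min_eq_right (by linarith)
    rw [hy'eq] at hb2
    have hkey : (1:ℝ)/2 ≤ ((b:ℝ)+1)/2^(j'+1) := by
      by_contra hlt
      push_neg at hlt
      rw [div_lt_iff₀ h2jr] at hlt
      have hnat : 2*(b+1) < 2^(j'+1) := by
        have : 2*((b:ℝ)+1) < 2^(j'+1) := by linarith
        exact_mod_cast this
      have hnat2 : 2*(b+1) + 2 ≤ 2^(j'+1) := by omega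
      have hr2 : 2*((b:ℝ)+1) + 2 ≤ 2^(j'+1) := by exact_mod_cast hnat2
      have hdiv : ((b:ℝ)+1)/2^(j'+1) ≤ 1/2 - 1/2^(j'+1) := by
        rw [div_le_iff₀ h2jr]
        have hexp : ((1:ℝ)/2 - 1/2^(j'+1)) * 2^(j'+1) = 2^(j'+1)/2 - 1 := by
          field_simp
        rw [hexp]; linarith
      have hj2 : (1:ℝ)/2^n ≤ 1/2^(j'+1) :=
        one_div_le_one_div_of_le (by positivity) (two_pow_le hjn)
      have hεn : (1:ℝ)/2^n = 2*ε := by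
        rw [hε, pow_succ]
        have : (2:ℝ)^n ≠ 0 := by positivity
        field_simp
      linarith
    linarith

/-- every point of the top half is covered by a tile lying in the top half -/
lemma cover_top {n : ℕ} (hn : 1 ≤ n) {F : Set (Set (ℝ × ℝ))}
    (hUF : ⋃₀ F = unitSquare)
    (hj : ∀ t ∈ F, ∃ i j a b : ℕ, i + j = n ∧ a < 2^i ∧ b < 2^j ∧ 1 ≤ j ∧ t = dyadicTile i j a b)
    {x y : ℝ} (hx : x ∈ Icc (0:ℝ) 1) (hy0 : 1/2 ≤ y) (hy2 : y ≤ 1) :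
    ∃ t ∈ F, (t ⊆ Icc (0:ℝ) 1 ×ˢ Icc (1/2:ℝ) 1) ∧ (x, y) ∈ t := by
  have h2n : (0:ℝ) < 2 ^ n := by positivity
  set ε : ℝ := 1 / 2 ^ (n+1) with hε
  have hεpos : 0 < ε := by positivity
  have hε4 : ε ≤ 1/4 := by
    rw [hε, div_le_div_iff₀ (by positivity) (by norm_num)]
    have h4 : (2:ℝ)^2 ≤ 2^(n+1) := two_pow_le (by omega)
    norm_num at h4 ⊢
    linarith
  set y' := max y (1/2 + ε) with hy'
  have hy'1 : y' ≤ 1 := max_le hy2 (by linarith)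
  have hy'gt : 1/2 < y' := lt_of_lt_of_le (by linarith) (le_max_right _ _)
  have hy'y : y ≤ y' := le_max_left _ _
  have hmem : (x, y') ∈ ⋃₀ F := by
    rw [hUF]
    exact ⟨hx, by linarith, hy'1⟩
  obtain ⟨t, htF, htm⟩ := hmem
  obtain ⟨i, j, a, b, hij, ha, hb, hj1, rfl⟩ := hj t htF
  have hxm : x ∈ Icc ((a:ℝ)/2^i) (((a:ℝ)+1)/2^i) := htm.1
  have hb1 : (b:ℝ)/2^j ≤ y' := htm.2.1
  have hb2 : y' ≤ ((b:ℝ)+1)/2^j := htm.2.2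
  have hjn : j ≤ n := by omega
  obtain ⟨j', rfl⟩ : ∃ j', j = j' + 1 := ⟨j - 1, by omega⟩
  have h2j : (2:ℕ)^(j'+1) = 2 * 2^j' := by ring
  have h2jr : (0:ℝ) < 2 ^ (j'+1) := by positivity
  have hA : 2^(j'+1) ≤ 2*b := by
    have hlt : (1:ℝ)/2 < ((b:ℝ)+1)/2^(j'+1) := lt_of_lt_of_le hy'gt hb2
    rw [lt_div_iff₀ h2jr] at hlt
    have hnat : 2^(j'+1) < 2*(b+1) := by
      have : (2:ℝ)^(j'+1) < 2*((b:ℝ)+1) := by linarith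
      exact_mod_cast this
    omega
  have hsub : dyadicTile i (j'+1) a b ⊆ Icc (0:ℝ) 1 ×ˢ Icc (1/2:ℝ) 1 := by
    rw [dyadicTile]; exact Set.prod_mono (segX ha) (segHigh hb hA)
  refine ⟨_, htF, hsub, hxm, ?_, le_trans hy'y hb2⟩
  by_cases hyc : 1/2 + ε ≤ y
  · have hyy : y' = y := max_eq_left hyc
    rw [hyy] at hb1; exact hb1
  · push_neg at hyc
    have hy'eq : y' = 1/2 + ε := max_eq_right (by linarith)
    rw [hy'eq] at hb1
    have hkey : (b:ℝ)/2^(j'+1) ≤ 1/2 := by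
      by_contra hlt
      push_neg at hlt
      rw [lt_div_iff₀ h2jr] at hlt
      have hnat : 2^(j'+1) < 2*b := by
        have : (2:ℝ)^(j'+1) < 2*(b:ℝ) := by linarith
        exact_mod_cast this
      have hnat2 : 2^(j'+1) + 2 ≤ 2*b := by omega
      have hr2 : (2:ℝ)^(j'+1) + 2 ≤ 2*(b:ℝ) := by exact_mod_cast hnat2
      have hdiv : (1:ℝ)/2 + 1/2^(j'+1) ≤ (b:ℝ)/2^(j'+1) := by
        rw [le_div_iff₀ h2jr]
        have hexp : ((1:ℝ)/2 + 1/2^(j'+1)) * 2^(j'+1) = 2^(j'+1)/2 + 1 := by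
          field_simp
        rw [hexp]; linarith
      have hj2 : (1:ℝ)/2^n ≤ 1/2^(j'+1) :=
        one_div_le_one_div_of_le (by positivity) (two_pow_le hjn)
      have hεn : (1:ℝ)/2^n = 2*ε := by
        rw [hε, pow_succ]
        have : (2:ℝ)^n ≠ 0 := by positivity
        field_simp
      linarith
    linarith
lemma cover_left {n : ℕ} (hn : 1 ≤ n) {F : Set (Set (ℝ × ℝ))}
    (hUF : ⋃₀ F = unitSquare)
    (hi : ∀ t ∈ F, ∃ i j a b : ℕ, i + j = n ∧ a < 2^i ∧ b < 2^j ∧ 1 ≤ i ∧ t = dyadicTile i j a b)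
    {x y : ℝ} (hy : y ∈ Icc (0:ℝ) 1) (hx0 : 0 ≤ x) (hx2 : x ≤ 1/2) :
    ∃ t ∈ F, (t ⊆ Icc (0:ℝ) (1/2) ×ˢ Icc (0:ℝ) 1) ∧ (x, y) ∈ t := by
  have h2n : (0:ℝ) < 2 ^ n := by positivity
  set ε : ℝ := 1 / 2 ^ (n+1) with hε
  have hεpos : 0 < ε := by positivity
  have hε4 : ε ≤ 1/4 := by
    rw [hε, div_le_div_iff₀ (by positivity) (by norm_num)]
    have h4 : (2:ℝ)^2 ≤ 2^(n+1) := two_pow_le (by omega)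
    norm_num at h4 ⊢
    linarith
  set x' := min x (1/2 - ε) with hx'
  have hx'0 : 0 ≤ x' := le_min hx0 (by linarith)
  have hx'lt : x' < 1/2 := lt_of_le_of_lt (min_le_right _ _) (by linarith)
  have hx'x : x' ≤ x := min_le_left _ _
  have hmem : (x', y) ∈ ⋃₀ F := by
    rw [hUF]
    exact ⟨⟨hx'0, by linarith⟩, hy⟩
  obtain ⟨t, htF, htm⟩ := hmem
  obtain ⟨i, j, a, b, hij, ha, hb, hi1, rfl⟩ := hi t htF
  have hym : y ∈ Icc ((b:ℝ)/2^j) (((b:ℝ)+1)/2^j) := htm.2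
  have ha1 : (a:ℝ)/2^i ≤ x' := htm.1.1
  have ha2 : x' ≤ ((a:ℝ)+1)/2^i := htm.1.2
  have hin : i ≤ n := by omega
  obtain ⟨i', rfl⟩ : ∃ i', i = i' + 1 := ⟨i - 1, by omega⟩
  have h2i : (2:ℕ)^(i'+1) = 2 * 2^i' := by ring
  have h2ir : (0:ℝ) < 2 ^ (i'+1) := by positivity
  have hA : 2*(a+1) ≤ 2^(i'+1) := by
    have hlt : (a:ℝ)/2^(i'+1) < 1/2 := lt_of_le_of_lt ha1 hx'lt
    rw [div_lt_iff₀ h2ir] at hlt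
    have hnat : 2*a < 2^(i'+1) := by
      have : 2*(a:ℝ) < 2^(i'+1) := by linarith
      exact_mod_cast this
    omega
  have hsub : dyadicTile (i'+1) j a b ⊆ Icc (0:ℝ) (1/2) ×ˢ Icc (0:ℝ) 1 := by
    rw [dyadicTile]; exact Set.prod_mono (segLow hA) (segX hb)
  refine ⟨_, htF, hsub, ⟨le_trans ha1 hx'x, ?_⟩, hym⟩
  by_cases hxc : x ≤ 1/2 - ε
  · have hxx : x' = x := min_eq_left hxc
    rw [hxx] at ha2; exact ha2
  · push_neg at hxc
    have hx'eq : x' = 1/2 - ε := min_eq_right (by linarith)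
    rw [hx'eq] at ha2
    have hkey : (1:ℝ)/2 ≤ ((a:ℝ)+1)/2^(i'+1) := by
      by_contra hlt
      push_neg at hlt
      rw [div_lt_iff₀ h2ir] at hlt
      have hnat : 2*(a+1) < 2^(i'+1) := by
        have : 2*((a:ℝ)+1) < 2^(i'+1) := by linarith
        exact_mod_cast this
      have hnat2 : 2*(a+1) + 2 ≤ 2^(i'+1) := by omega
      have hr2 : 2*((a:ℝ)+1) + 2 ≤ 2^(i'+1) := by exact_mod_cast hnat2
      have hdiv : ((a:ℝ)+1)/2^(i'+1) ≤ 1/2 - 1/2^(i'+1) := by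
        rw [div_le_iff₀ h2ir]
        have hexp : ((1:ℝ)/2 - 1/2^(i'+1)) * 2^(i'+1) = 2^(i'+1)/2 - 1 := by
          field_simp
        rw [hexp]; linarith
      have hi2 : (1:ℝ)/2^n ≤ 1/2^(i'+1) :=
        one_div_le_one_div_of_le (by positivity) (two_pow_le hin)
      have hεn : (1:ℝ)/2^n = 2*ε := by
        rw [hε, pow_succ]
        have : (2:ℝ)^n ≠ 0 := by positivity
        field_simp
      linarith
    linarith

lemma cover_right {n : ℕ} (hn : 1 ≤ n) {F : Set (Set (ℝ × ℝ))}
    (hUF : ⋃₀ F = unitSquare)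
    (hi : ∀ t ∈ F, ∃ i j a b : ℕ, i + j = n ∧ a < 2^i ∧ b < 2^j ∧ 1 ≤ i ∧ t = dyadicTile i j a b)
    {x y : ℝ} (hy : y ∈ Icc (0:ℝ) 1) (hx0 : 1/2 ≤ x) (hx2 : x ≤ 1) :
    ∃ t ∈ F, (t ⊆ Icc (1/2:ℝ) 1 ×ˢ Icc (0:ℝ) 1) ∧ (x, y) ∈ t := by
  have h2n : (0:ℝ) < 2 ^ n := by positivity
  set ε : ℝ := 1 / 2 ^ (n+1) with hε
  have hεpos : 0 < ε := by positivity
  have hε4 : ε ≤ 1/4 := by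
    rw [hε, div_le_div_iff₀ (by positivity) (by norm_num)]
    have h4 : (2:ℝ)^2 ≤ 2^(n+1) := two_pow_le (by omega)
    norm_num at h4 ⊢
    linarith
  set x' := max x (1/2 + ε) with hx'
  have hx'1 : x' ≤ 1 := max_le hx2 (by linarith)
  have hx'gt : 1/2 < x' := lt_of_lt_of_le (by linarith) (le_max_right _ _)
  have hx'x : x ≤ x' := le_max_left _ _
  have hmem : (x', y) ∈ ⋃₀ F := by
    rw [hUF]
    exact ⟨⟨by linarith, hx'1⟩, hy⟩
  obtain ⟨t, htF, htm⟩ := hmem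
  obtain ⟨i, j, a, b, hij, ha, hb, hi1, rfl⟩ := hi t htF
  have hym : y ∈ Icc ((b:ℝ)/2^j) (((b:ℝ)+1)/2^j) := htm.2
  have ha1 : (a:ℝ)/2^i ≤ x' := htm.1.1
  have ha2 : x' ≤ ((a:ℝ)+1)/2^i := htm.1.2
  have hin : i ≤ n := by omega
  obtain ⟨i', rfl⟩ : ∃ i', i = i' + 1 := ⟨i - 1, by omega⟩
  have h2i : (2:ℕ)^(i'+1) = 2 * 2^i' := by ring
  have h2ir : (0:ℝ) < 2 ^ (i'+1) := by positivity
  have hA : 2^(i'+1) ≤ 2*a := by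
    have hlt : (1:ℝ)/2 < ((a:ℝ)+1)/2^(i'+1) := lt_of_lt_of_le hx'gt ha2
    rw [lt_div_iff₀ h2ir] at hlt
    have hnat : 2^(i'+1) < 2*(a+1) := by
      have : (2:ℝ)^(i'+1) < 2*((a:ℝ)+1) := by linarith
      exact_mod_cast this
    omega
  have hsub : dyadicTile (i'+1) j a b ⊆ Icc (1/2:ℝ) 1 ×ˢ Icc (0:ℝ) 1 := by
    rw [dyadicTile]; exact Set.prod_mono (segHigh ha hA) (segX hb)
  refine ⟨_, htF, hsub, ⟨?_, le_trans hx'x ha2⟩, hym⟩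
  by_cases hxc : 1/2 + ε ≤ x
  · have hxx : x' = x := max_eq_left hxc
    rw [hxx] at ha1; exact ha1
  · push_neg at hxc
    have hx'eq : x' = 1/2 + ε := max_eq_right (by linarith)
    rw [hx'eq] at ha1
    have hkey : (a:ℝ)/2^(i'+1) ≤ 1/2 := by
      by_contra hlt
      push_neg at hlt
      rw [lt_div_iff₀ h2ir] at hlt
      have hnat : 2^(i'+1) < 2*a := by
        have : (2:ℝ)^(i'+1) < 2*(a:ℝ) := by linarith
        exact_mod_cast this
      have hnat2 : 2^(i'+1) + 2 ≤ 2*a := by omega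
      have hr2 : (2:ℝ)^(i'+1) + 2 ≤ 2*(a:ℝ) := by exact_mod_cast hnat2
      have hdiv : (1:ℝ)/2 + 1/2^(i'+1) ≤ (a:ℝ)/2^(i'+1) := by
        rw [le_div_iff₀ h2ir]
        have hexp : ((1:ℝ)/2 + 1/2^(i'+1)) * 2^(i'+1) = 2^(i'+1)/2 + 1 := by
          field_simp
        rw [hexp]; linarith
      have hi2 : (1:ℝ)/2^n ≤ 1/2^(i'+1) :=
        one_div_le_one_div_of_le (by positivity) (two_pow_le hin)
      have hεn : (1:ℝ)/2^n = 2*ε := by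
        rw [hε, pow_succ]
        have : (2:ℝ)^n ≠ 0 := by positivity
        field_simp
      linarith
    linarith

lemma vert_split {n : ℕ} (hn : 1 ≤ n) {F : Set (Set (ℝ × ℝ))} (hF : IsTiling n F unitSquare)
    (hi : ∀ t ∈ F, ∃ i j a b : ℕ, i + j = n ∧ a < 2^i ∧ b < 2^j ∧ 1 ≤ i ∧ t = dyadicTile i j a b) :
    ∃ F₁ F₂ : Set (Set (ℝ × ℝ)), F = F₁ ∪ F₂ ∧
      IsTiling n F₁ (Set.Icc (0 : ℝ) (1 / 2) ×ˢ Set.Icc (0 : ℝ) 1) ∧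
      IsTiling n F₂ (Set.Icc (1 / 2 : ℝ) 1 ×ˢ Set.Icc (0 : ℝ) 1) := by
  obtain ⟨hTiles, hUF, hPW⟩ := hF
  refine ⟨{t | t ∈ F ∧ t ⊆ Icc (0:ℝ) (1/2) ×ˢ Icc (0:ℝ) 1},
          {t | t ∈ F ∧ t ⊆ Icc (1/2:ℝ) 1 ×ˢ Icc (0:ℝ) 1}, ?_, ?_, ?_⟩
  · apply Subset.antisymm
    · intro t htF
      obtain ⟨i, j, a, b, hij, ha, hb, hi1, rfl⟩ := hi t htF
      obtain ⟨i', rfl⟩ : ∃ i', i = i' + 1 := ⟨i - 1, by omega⟩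
      have h2i : (2:ℕ)^(i'+1) = 2 * 2^i' := by ring
      by_cases hc : 2*(a+1) ≤ 2^(i'+1)
      · exact Or.inl ⟨htF, by rw [dyadicTile]; exact Set.prod_mono (segLow hc) (segX hb)⟩
      · refine Or.inr ⟨htF, ?_⟩
        have hc' : 2^(i'+1) ≤ 2*a := by omega
        rw [dyadicTile]; exact Set.prod_mono (segHigh ha hc') (segX hb)
    · rintro t (⟨h, -⟩ | ⟨h, -⟩) <;> exact h
  · refine ⟨fun t ht => hTiles t ht.1, ?_, hPW.mono (fun t ht => ht.1)⟩
    apply Subset.antisymm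
    · exact sUnion_subset fun t ht => ht.2
    · rintro ⟨x, y⟩ hp
      obtain ⟨t, htF, hsub, hmem⟩ := cover_left hn hUF hi hp.2 hp.1.1 hp.1.2
      exact ⟨t, ⟨htF, hsub⟩, hmem⟩
  · refine ⟨fun t ht => hTiles t ht.1, ?_, hPW.mono (fun t ht => ht.1)⟩
    apply Subset.antisymm
    · exact sUnion_subset fun t ht => ht.2
    · rintro ⟨x, y⟩ hp
      obtain ⟨t, htF, hsub, hmem⟩ := cover_right hn hUF hi hp.2 hp.1.1 hp.1.2
      exact ⟨t, ⟨htF, hsub⟩, hmem⟩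
lemma interior_tile (i j a b : ℕ) :
    interior (dyadicTile i j a b) =
      Ioo ((a:ℝ)/2^i) (((a:ℝ)+1)/2^i) ×ˢ Ioo ((b:ℝ)/2^j) (((b:ℝ)+1)/2^j) := by
  rw [dyadicTile, interior_prod_eq, interior_Icc, interior_Icc]

lemma horiz_split {n : ℕ} (hn : 1 ≤ n) {F : Set (Set (ℝ × ℝ))} (hF : IsTiling n F unitSquare)
    (hj : ∀ t ∈ F, ∃ i j a b : ℕ, i + j = n ∧ a < 2^i ∧ b < 2^j ∧ 1 ≤ j ∧ t = dyadicTile i j a b) :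
    ∃ F₁ F₂ : Set (Set (ℝ × ℝ)), F = F₁ ∪ F₂ ∧
      IsTiling n F₁ (Set.Icc (0 : ℝ) 1 ×ˢ Set.Icc (0 : ℝ) (1 / 2)) ∧
      IsTiling n F₂ (Set.Icc (0 : ℝ) 1 ×ˢ Set.Icc (1 / 2 : ℝ) 1) := by
  obtain ⟨hTiles, hUF, hPW⟩ := hF
  refine ⟨{t | t ∈ F ∧ t ⊆ Icc (0:ℝ) 1 ×ˢ Icc (0:ℝ) (1/2)},
          {t | t ∈ F ∧ t ⊆ Icc (0:ℝ) 1 ×ˢ Icc (1/2:ℝ) 1}, ?_, ?_, ?_⟩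
  · apply Subset.antisymm
    · intro t htF
      obtain ⟨i, j, a, b, hij, ha, hb, hj1, rfl⟩ := hj t htF
      obtain ⟨j', rfl⟩ : ∃ j', j = j' + 1 := ⟨j - 1, by omega⟩
      have h2j : (2:ℕ)^(j'+1) = 2 * 2^j' := by ring
      by_cases hc : 2*(b+1) ≤ 2^(j'+1)
      · exact Or.inl ⟨htF, by rw [dyadicTile]; exact Set.prod_mono (segX ha) (segLow hc)⟩
      · refine Or.inr ⟨htF, ?_⟩
        have hc' : 2^(j'+1) ≤ 2*b := by omega
        rw [dyadicTile]; exact Set.prod_mono (segX ha) (segHigh hb hc')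
    · rintro t (⟨h, -⟩ | ⟨h, -⟩) <;> exact h
  · refine ⟨fun t ht => hTiles t ht.1, ?_, hPW.mono (fun t ht => ht.1)⟩
    apply Subset.antisymm
    · exact sUnion_subset fun t ht => ht.2
    · rintro ⟨x, y⟩ hp
      obtain ⟨t, htF, hsub, hmem⟩ := cover_bottom hn hUF hj hp.1 hp.2.1 hp.2.2
      exact ⟨t, ⟨htF, hsub⟩, hmem⟩
  · refine ⟨fun t ht => hTiles t ht.1, ?_, hPW.mono (fun t ht => ht.1)⟩
    apply Subset.antisymm
    · exact sUnion_subset fun t ht => ht.2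
    · rintro ⟨x, y⟩ hp
      obtain ⟨t, htF, hsub, hmem⟩ := cover_top hn hUF hj hp.1 hp.2.1 hp.2.2
      exact ⟨t, ⟨htF, hsub⟩, hmem⟩
lemma tile_ne {n a₀ b : ℕ} (hn : 1 ≤ n) : dyadicTile 0 n 0 b ≠ dyadicTile n 0 a₀ 0 := by
  intro heq
  have h2n : (0:ℝ) < 2^n := by positivity
  have h2nbig : (2:ℝ) ≤ 2^n := by
    calc (2:ℝ) = 2^1 := (pow_one 2).symm
    _ ≤ 2^n := pow_le_pow_right₀ one_le_two hn
  have hyy : (b:ℝ)/2^n ≤ ((b:ℝ)+1)/2^n := by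
    gcongr
    linarith
  have hmem0 : ((0:ℝ), (b:ℝ)/2^n) ∈ dyadicTile 0 n 0 b := by
    exact ⟨⟨by norm_num, by norm_num⟩, le_refl _, hyy⟩
  have hmem1 : ((1:ℝ), (b:ℝ)/2^n) ∈ dyadicTile 0 n 0 b := by
    exact ⟨⟨by norm_num, by norm_num⟩, le_refl _, hyy⟩
  rw [heq] at hmem0 hmem1
  have h0 : (a₀:ℝ)/2^n ≤ 0 := hmem0.1.1
  have h1 : (1:ℝ) ≤ ((a₀:ℝ)+1)/2^n := hmem1.1.2
  have ha' : (a₀:ℝ) ≤ 0 := by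
    rw [div_le_iff₀ h2n] at h0; simpa using h0
  have ha0 : (a₀:ℝ) = 0 := le_antisymm ha' (by positivity)
  rw [ha0, le_div_iff₀ h2n] at h1
  linarith

lemma tile_meet {n a₀ b : ℕ} (hn : 1 ≤ n) (ha₀ : a₀ < 2^n) (hb : b < 2^n) :
    ((2*(a₀:ℝ)+1)/2^(n+1), (2*(b:ℝ)+1)/2^(n+1)) ∈
      interior (dyadicTile 0 n 0 b) ∩ interior (dyadicTile n 0 a₀ 0) := by
  have h2n : (0:ℝ) < 2^n := by positivity
  have h2n1 : (0:ℝ) < 2^(n+1) := by positivity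
  have ha₀r : (a₀:ℝ) + 1 ≤ 2^n := by exact_mod_cast Nat.succ_le_of_lt ha₀
  have hbr : (b:ℝ) + 1 ≤ 2^n := by exact_mod_cast Nat.succ_le_of_lt hb
  have hps : (2:ℝ)^(n+1) = 2^n * 2 := by rw [pow_succ]
  constructor
  · rw [interior_tile]
    refine ⟨⟨?_, ?_⟩, ?_, ?_⟩
    · simp only [Nat.cast_zero, pow_zero, zero_div]
      positivity
    · simp only [Nat.cast_zero, pow_zero, zero_add, div_one]
      rw [div_lt_one h2n1, hps]
      nlinarith
    · rw [div_lt_div_iff₀ h2n h2n1, hps]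
      nlinarith
    · rw [div_lt_div_iff₀ h2n1 h2n, hps]
      nlinarith
  · rw [interior_tile]
    refine ⟨⟨?_, ?_⟩, ?_, ?_⟩
    · rw [div_lt_div_iff₀ h2n h2n1, hps]
      nlinarith
    · rw [div_lt_div_iff₀ h2n1 h2n, hps]
      nlinarith
    · simp only [Nat.cast_zero, pow_zero, zero_div]
      positivity
    · simp only [Nat.cast_zero, pow_zero, zero_add, div_one]
      rw [div_lt_one h2n1, hps]
      nlinarith


/-- for `n ≥ 1`, every order-`n` tiling of the unit square is either the union
of tilings of the two horizontal halves, or the union of tilings of the two vertical halves. -/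
theorem tiling_splits (n : ℕ) (hn : 1 ≤ n) (F : Set (Set (ℝ × ℝ)))
    (hF : IsTiling n F unitSquare) :
    (∃ F₁ F₂ : Set (Set (ℝ × ℝ)), F = F₁ ∪ F₂ ∧
      IsTiling n F₁ (Set.Icc (0 : ℝ) 1 ×ˢ Set.Icc (0 : ℝ) (1 / 2)) ∧
      IsTiling n F₂ (Set.Icc (0 : ℝ) 1 ×ˢ Set.Icc (1 / 2 : ℝ) 1)) ∨
    (∃ F₁ F₂ : Set (Set (ℝ × ℝ)), F = F₁ ∪ F₂ ∧
      IsTiling n F₁ (Set.Icc (0 : ℝ) (1 / 2) ×ˢ Set.Icc (0 : ℝ) 1) ∧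
      IsTiling n F₂ (Set.Icc (1 / 2 : ℝ) 1 ×ˢ Set.Icc (0 : ℝ) 1)) := by
  by_cases hex : ∃ t ∈ F, ∃ a : ℕ, a < 2^n ∧ t = dyadicTile n 0 a 0
  · right
    apply vert_split hn hF
    intro t htF
    obtain ⟨i, j, a, b, hij, ha, hb, rfl⟩ := hF.1 t htF
    refine ⟨i, j, a, b, hij, ha, hb, ?_, rfl⟩
    by_contra hi0
    have hi : i = 0 := by omega
    subst hi
    have hjn : j = n := by omega
    subst hjn
    have ha0 : a = 0 := by
      have : (2:ℕ)^0 = 1 := rfl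
      omega
    subst ha0
    obtain ⟨t₀, ht₀F, a₀, ha₀, rfl⟩ := hex
    have hdisj : interior (dyadicTile 0 j 0 b) ∩ interior (dyadicTile j 0 a₀ 0) = ∅ :=
      hF.2.2 htF ht₀F (tile_ne hn)
    have hP := tile_meet hn ha₀ hb
    rw [hdisj] at hP
    exact hP
  · left
    apply horiz_split hn hF
    intro t htF
    obtain ⟨i, j, a, b, hij, ha, hb, rfl⟩ := hF.1 t htF
    refine ⟨i, j, a, b, hij, ha, hb, ?_, rfl⟩
    by_contra hj0
    have hj : j = 0 := by omega
    subst hj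
    have hin : i = n := by omega
    subst hin
    have hb0 : b = 0 := by
      have : (2:ℕ)^0 = 1 := rfl
      omega
    subst hb0
    exact hex ⟨_, htF, a, ha, rfl⟩
end
end

section
/- For every natural number n and every p ∈ [0,1], T_{n+1}(p) ≤ 2·T_n(p)^2. -/
open Set Filter Topology Finset Function

noncomputable section

/-- Index type for the dyadic tiles of order `n`: a shape `i` (width `2^{-i}`, height
`2^{-(n-i)}`) together with the horizontal and vertical positions. -/
abbrev TileIndex (n : ℕ) : Type :=
  Σ i : Fin (n + 1), Fin (2 ^ (i : ℕ)) × Fin (2 ^ (n - (i : ℕ)))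

/-- The order-`n` tile corresponding to an index. -/
def tileOf (n : ℕ) (x : TileIndex n) : Set (ℝ × ℝ) :=
  dyadicTile (x.1 : ℕ) (n - (x.1 : ℕ)) (x.2.1 : ℕ) (x.2.2 : ℕ)

/-- The set `S` of available order-`n` tiles admits a tiling of the unit square. -/
def TileableSquare (n : ℕ) (S : Finset (TileIndex n)) : Prop :=
  ∃ F : Set (Set (ℝ × ℝ)), (∀ t ∈ F, ∃ x ∈ S, t = tileOf n x) ∧ IsTiling n F unitSquare

open Classical in
/-- Probability of the event `E` when each of the `(n+1)·2^n` order-`n` dyadic tiles is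
available independently with probability `p`. -/
def Pr (n : ℕ) (p : ℝ) (E : Finset (TileIndex n) → Prop) : ℝ :=
  ∑ S : Finset (TileIndex n),
    if E S then p ^ S.card * (1 - p) ^ ((n + 1) * 2 ^ n - S.card) else 0

/-- `T n p`: the probability that some set of available order-`n` tiles tiles `[0,1]²`. -/
def T (n : ℕ) (p : ℝ) : ℝ := Pr n p (TileableSquare n)

/-- The critical probability `p_c`. -/
def pc : ℝ :=
  sInf {p : ℝ | p ∈ Set.Icc (0 : ℝ) 1 ∧ Tendsto (fun n => T n p) atTop (𝓝 1)}



open Classical in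
/-- preimage of a finset under a map. -/
def pre {α β : Type*} [Fintype α] (f : α → β) (S : Finset β) : Finset α :=
  Finset.univ.filter (fun a => f a ∈ S)

open Classical in
lemma mem_pre {α β : Type*} [Fintype α] (f : α → β) (S : Finset β) (a : α) :
    a ∈ pre f S ↔ f a ∈ S := by simp [pre]

open Classical in
lemma binom_aux {β : Type*} [DecidableEq β] (p q : ℝ) (u : Finset β) :
    ∑ D ∈ u.powerset, p ^ D.card * q ^ (u.card - D.card) = (p + q) ^ u.card := by
  rw [← Finset.prod_const, Finset.prod_add]
  refine Finset.sum_congr rfl fun t ht => ?_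
  rw [Finset.prod_const, Finset.prod_const,
    Finset.card_sdiff_of_subset (Finset.mem_powerset.mp ht)]

open Classical in
lemma sum_split {α β γ : Type*} [Fintype α] [Fintype β] [Fintype γ]
    (f : α → β) (g : γ → β) (hf : Injective f) (hg : Injective g)
    (hd : ∀ a c, f a ≠ g c) (p : ℝ)
    (P : Finset α → Prop) (Q : Finset γ → Prop) (E : Finset β → Prop)
    (hE : ∀ S, E S ↔ (P (pre f S) ∧ Q (pre g S))) :
    (∑ S : Finset β, if E S then
        p ^ S.card * (1 - p) ^ (Fintype.card β - S.card) else 0)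
    = (∑ A : Finset α, if P A then p ^ A.card * (1 - p) ^ (Fintype.card α - A.card) else 0) *
      (∑ C : Finset γ, if Q C then p ^ C.card * (1 - p) ^ (Fintype.card γ - C.card) else 0) := by
  classical
  set q : ℝ := 1 - p with hq
  set uf : Finset β := Finset.univ.image f with huf
  set ug : Finset β := Finset.univ.image g with hug
  set R : Finset β := Finset.univ \ (uf ∪ ug) with hR
  -- cardinals
  have hufug : Disjoint uf ug := by
    rw [Finset.disjoint_left]
    rintro b hb hb'
    obtain ⟨a, -, rfl⟩ := Finset.mem_image.mp hb
    obtain ⟨c, -, hc⟩ := Finset.mem_image.mp hb'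
    exact hd a c hc.symm
  have hRf : Disjoint R uf := by
    rw [Finset.disjoint_left]; intro b hb hb'
    exact (Finset.mem_sdiff.mp hb).2 (Finset.mem_union_left _ hb')
  have hRg : Disjoint R ug := by
    rw [Finset.disjoint_left]; intro b hb hb'
    exact (Finset.mem_sdiff.mp hb).2 (Finset.mem_union_right _ hb')
  have hcard : Fintype.card β = Fintype.card α + Fintype.card γ + R.card := by
    have h1 : (uf ∪ ug) ∪ R = Finset.univ := by
      rw [hR, Finset.union_sdiff_of_subset (Finset.subset_univ _)]
    have h2 : ((uf ∪ ug) ∪ R).card = (uf ∪ ug).card + R.card := by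
      rw [Finset.card_union_of_disjoint]
      exact Finset.disjoint_union_left.mpr ⟨hRf.symm, hRg.symm⟩
    have h3 : (uf ∪ ug).card = Fintype.card α + Fintype.card γ := by
      rw [Finset.card_union_of_disjoint hufug, huf, hug,
        Finset.card_image_of_injective _ hf, Finset.card_image_of_injective _ hg,
        Finset.card_univ, Finset.card_univ]
    rw [← Finset.card_univ (α := β), ← h1, h2, h3]
  -- the reindexing
  have key : (∑ S : Finset β, if E S then
        p ^ S.card * q ^ (Fintype.card β - S.card) else 0)
      = ∑ t ∈ (Finset.univ ×ˢ Finset.univ ×ˢ R.powerset :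
          Finset (Finset α × Finset γ × Finset β)),
          (if P t.1 then p ^ t.1.card * q ^ (Fintype.card α - t.1.card) else 0) *
          ((if Q t.2.1 then p ^ t.2.1.card * q ^ (Fintype.card γ - t.2.1.card) else 0) *
            (p ^ t.2.2.card * q ^ (R.card - t.2.2.card))) := by
    refine Finset.sum_nbij' (fun S => (pre f S, pre g S, S ∩ R))
      (fun t => t.1.image f ∪ (t.2.1.image g ∪ t.2.2)) ?_ ?_ ?_ ?_ ?_
    · intro S _
      simp only [Finset.mem_product, Finset.mem_univ, true_and, Finset.mem_powerset]
      exact Finset.inter_subset_right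
    · intro t _; exact Finset.mem_univ _
    · -- left inverse : reconstruct S
      intro S _
      ext b
      simp only [Finset.mem_union, Finset.mem_image, mem_pre, Finset.mem_inter]
      constructor
      · rintro (⟨a, ha, rfl⟩ | ⟨c, hc, rfl⟩ | ⟨hb, -⟩) <;> assumption
      · intro hb
        by_cases hbf : b ∈ uf
        · obtain ⟨a, -, rfl⟩ := Finset.mem_image.mp hbf
          exact Or.inl ⟨a, hb, rfl⟩
        by_cases hbg : b ∈ ug
        · obtain ⟨c, -, rfl⟩ := Finset.mem_image.mp hbg
          exact Or.inr (Or.inl ⟨c, hb, rfl⟩)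
        · refine Or.inr (Or.inr ⟨hb, ?_⟩)
          rw [hR]
          simp only [Finset.mem_sdiff, Finset.mem_univ, true_and, Finset.mem_union]
          tauto
    · -- right inverse
      rintro ⟨A, C, D⟩ ht
      simp only [Finset.mem_product, Finset.mem_univ, true_and, Finset.mem_powerset] at ht
      have hDf : ∀ a : α, f a ∉ D := fun a ha =>
        Finset.disjoint_left.mp hRf (ht ha) (Finset.mem_image_of_mem f (Finset.mem_univ a))
      have hDg : ∀ c : γ, g c ∉ D := fun c hc =>
        Finset.disjoint_left.mp hRg (ht hc) (Finset.mem_image_of_mem g (Finset.mem_univ c))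
      refine Prod.ext ?_ (Prod.ext ?_ ?_)
      · ext a
        simp only [mem_pre, Finset.mem_union, Finset.mem_image]
        constructor
        · rintro (⟨a', ha', h⟩ | ⟨c, -, h⟩ | h)
          · rwa [← hf h]
          · exact absurd h.symm (hd a c)
          · exact absurd h (hDf a)
        · intro ha; exact Or.inl ⟨a, ha, rfl⟩
      · ext c
        simp only [mem_pre, Finset.mem_union, Finset.mem_image]
        constructor
        · rintro (⟨a, -, h⟩ | ⟨c', hc', h⟩ | h)
          · exact absurd h (hd a c)
          · rwa [← hg h]
          · exact absurd h (hDg c)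
        · intro hc; exact Or.inr (Or.inl ⟨c, hc, rfl⟩)
      · ext b
        simp only [Finset.mem_inter, Finset.mem_union, Finset.mem_image]
        constructor
        · rintro ⟨(⟨a, -, rfl⟩ | ⟨c, -, rfl⟩ | h), hbR⟩
          · exact absurd (Finset.mem_image_of_mem f (Finset.mem_univ a))
              (Finset.disjoint_left.mp hRf hbR)
          · exact absurd (Finset.mem_image_of_mem g (Finset.mem_univ c))
              (Finset.disjoint_left.mp hRg hbR)
          · exact h
        · intro hb; exact ⟨Or.inr (Or.inr hb), ht hb⟩
    · -- terms match
      intro S _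
      have hA : (pre f S).card ≤ Fintype.card α := Finset.card_le_univ _
      have hC : (pre g S).card ≤ Fintype.card γ := Finset.card_le_univ _
      have hD : (S ∩ R).card ≤ R.card := Finset.card_le_card Finset.inter_subset_right
      have hScard : S.card = (pre f S).card + (pre g S).card + (S ∩ R).card := by
        have hdec : S = (pre f S).image f ∪ ((pre g S).image g ∪ (S ∩ R)) := by
          ext b
          simp only [Finset.mem_union, Finset.mem_image, mem_pre, Finset.mem_inter]
          constructor
          · intro hb
            by_cases hbf : b ∈ uf
            · obtain ⟨a, -, rfl⟩ := Finset.mem_image.mp hbf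
              exact Or.inl ⟨a, hb, rfl⟩
            by_cases hbg : b ∈ ug
            · obtain ⟨c, -, rfl⟩ := Finset.mem_image.mp hbg
              exact Or.inr (Or.inl ⟨c, hb, rfl⟩)
            · refine Or.inr (Or.inr ⟨hb, ?_⟩)
              rw [hR]
              simp only [Finset.mem_sdiff, Finset.mem_univ, true_and, Finset.mem_union]
              tauto
          · rintro (⟨a, ha, rfl⟩ | ⟨c, hc, rfl⟩ | ⟨hb, -⟩) <;> assumption
        have d1 : Disjoint ((pre g S).image g) (S ∩ R) :=
          Finset.disjoint_right.mpr fun b hb => by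
            intro hb'
            obtain ⟨c, -, rfl⟩ := Finset.mem_image.mp hb'
            exact Finset.disjoint_left.mp hRg (Finset.mem_of_mem_inter_right hb)
              (Finset.mem_image_of_mem g (Finset.mem_univ c))
        have d2 : Disjoint ((pre f S).image f) ((pre g S).image g ∪ (S ∩ R)) := by
          rw [Finset.disjoint_union_right]
          constructor
          · exact Finset.disjoint_left.mpr fun b hb hb' => by
              obtain ⟨a, -, rfl⟩ := Finset.mem_image.mp hb
              obtain ⟨c, -, hc⟩ := Finset.mem_image.mp hb'
              exact hd a c hc.symm
          · exact Finset.disjoint_left.mpr fun b hb hb' => by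
              obtain ⟨a, -, rfl⟩ := Finset.mem_image.mp hb
              exact Finset.disjoint_left.mp hRf (Finset.mem_of_mem_inter_right hb')
                (Finset.mem_image_of_mem f (Finset.mem_univ a))
        conv_lhs => rw [hdec]
        rw [Finset.card_union_of_disjoint d2, Finset.card_union_of_disjoint d1,
          Finset.card_image_of_injective _ hf, Finset.card_image_of_injective _ hg, add_assoc]
      simp only [hE]
      by_cases hP : P (pre f S) <;> by_cases hQ : Q (pre g S) <;>
        simp only [hP, hQ, if_true, if_false, true_and, false_and, and_true, and_false,
          zero_mul, mul_zero]
      have e1 : Fintype.card β - S.card =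
          (Fintype.card α - (pre f S).card) + ((Fintype.card γ - (pre g S).card) +
            (R.card - (S ∩ R).card)) := by omega
      rw [e1, hScard, pow_add, pow_add, pow_add, pow_add]
      ring
  rw [key, Finset.sum_product]
  have step : ∀ A : Finset α,
      (∑ t ∈ (Finset.univ ×ˢ R.powerset : Finset (Finset γ × Finset β)),
        (if P A then p ^ A.card * q ^ (Fintype.card α - A.card) else 0) *
          ((if Q t.1 then p ^ t.1.card * q ^ (Fintype.card γ - t.1.card) else 0) *
            (p ^ t.2.card * q ^ (R.card - t.2.card))))
      = (if P A then p ^ A.card * q ^ (Fintype.card α - A.card) else 0) *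
        (∑ C : Finset γ, if Q C then p ^ C.card * q ^ (Fintype.card γ - C.card) else 0) := by
    intro A
    rw [← Finset.mul_sum]
    congr 1
    rw [Finset.sum_product]
    have inner2 : ∀ C : Finset γ,
        (∑ D ∈ R.powerset,
          (if Q C then p ^ C.card * q ^ (Fintype.card γ - C.card) else 0) *
            (p ^ D.card * q ^ (R.card - D.card)))
        = (if Q C then p ^ C.card * q ^ (Fintype.card γ - C.card) else 0) := by
      intro C
      rw [← Finset.mul_sum, binom_aux, hq]
      norm_num
    exact Finset.sum_congr rfl fun C _ => inner2 C
  rw [Finset.sum_congr rfl fun A _ => step A, ← Finset.sum_mul]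

-- ### cardinality of the index type

lemma card_TileIndex (n : ℕ) : Fintype.card (TileIndex n) = (n + 1) * 2 ^ n := by
  classical
  rw [Fintype.card_sigma]
  have : ∀ i : Fin (n+1), Fintype.card (Fin (2 ^ (i:ℕ)) × Fin (2 ^ (n - (i:ℕ)))) = 2 ^ n := by
    intro i
    rw [Fintype.card_prod, Fintype.card_fin, Fintype.card_fin, ← pow_add]
    congr 1
    omega
  rw [Finset.sum_congr rfl fun i _ => this i, Finset.sum_const, Finset.card_univ,
    Fintype.card_fin, smul_eq_mul]

-- ### probability lemmas specialized to Pr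

open Classical in
lemma Pr_mono_or (n : ℕ) {p : ℝ} (hp0 : 0 ≤ p) (hp1 : p ≤ 1)
    {E A B : Finset (TileIndex n) → Prop} (h : ∀ S, E S → A S ∨ B S) :
    Pr n p E ≤ Pr n p A + Pr n p B := by
  rw [Pr, Pr, Pr, ← Finset.sum_add_distrib]
  refine Finset.sum_le_sum fun S _ => ?_
  have hw : 0 ≤ p ^ S.card * (1 - p) ^ ((n + 1) * 2 ^ n - S.card) :=
    mul_nonneg (pow_nonneg hp0 _) (pow_nonneg (by linarith) _)
  by_cases hE : E S
  · rcases h S hE with hA | hB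
    · simp only [hE, hA, if_true]
      have : (0:ℝ) ≤ if B S then p ^ S.card * (1 - p) ^ ((n + 1) * 2 ^ n - S.card) else 0 := by
        split <;> [exact hw; exact le_refl 0]
      linarith
    · simp only [hE, hB, if_true]
      have : (0:ℝ) ≤ if A S then p ^ S.card * (1 - p) ^ ((n + 1) * 2 ^ n - S.card) else 0 := by
        split <;> [exact hw; exact le_refl 0]
      linarith
  · simp only [hE, if_false]
    have h1 : (0:ℝ) ≤ if A S then p ^ S.card * (1 - p) ^ ((n + 1) * 2 ^ n - S.card) else 0 := by
      split <;> [exact hw; exact le_refl 0]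
    have h2 : (0:ℝ) ≤ if B S then p ^ S.card * (1 - p) ^ ((n + 1) * 2 ^ n - S.card) else 0 := by
      split <;> [exact hw; exact le_refl 0]
    linarith

open Classical in
lemma Pr_prod (n : ℕ) (p : ℝ) (f g : TileIndex n → TileIndex (n+1))
    (hf : Injective f) (hg : Injective g) (hd : ∀ a c, f a ≠ g c)
    (P Q : Finset (TileIndex n) → Prop) :
    Pr (n+1) p (fun S => P (pre f S) ∧ Q (pre g S)) = Pr n p P * Pr n p Q := by
  have h1 := card_TileIndex n
  have h2 := card_TileIndex (n+1)
  rw [Pr, Pr, Pr, ← h1, ← h2]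
  exact sum_split f g hf hg hd p P Q _ (fun S => Iff.rfl)

-- ### embeddings of index types

def embH (n : ℕ) (k : Fin 2) (x : TileIndex n) : TileIndex (n + 1) :=
  ⟨x.1.succ,
    ⟨(x.2.1 : ℕ) + (k : ℕ) * 2 ^ (x.1 : ℕ), by
      have h1 : (x.1.succ : ℕ) = (x.1 : ℕ) + 1 := rfl
      have h2 := x.2.1.isLt
      have h3 : (k : ℕ) ≤ 1 := by omega
      rw [h1, pow_succ]
      nlinarith [pow_pos (show (0:ℕ) < 2 by norm_num) (x.1 : ℕ)]⟩,
    ⟨(x.2.2 : ℕ), by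
      have h1 : (x.1.succ : ℕ) = (x.1 : ℕ) + 1 := rfl
      rw [h1, Nat.succ_sub_succ]
      exact x.2.2.isLt⟩⟩

def embV (n : ℕ) (k : Fin 2) (x : TileIndex n) : TileIndex (n + 1) :=
  ⟨x.1.castSucc,
    ⟨(x.2.1 : ℕ), by
      have h1 : (x.1.castSucc : ℕ) = (x.1 : ℕ) := rfl
      rw [h1]; exact x.2.1.isLt⟩,
    ⟨(x.2.2 : ℕ) + (k : ℕ) * 2 ^ (n - (x.1 : ℕ)), by
      have h1 : (x.1.castSucc : ℕ) = (x.1 : ℕ) := rfl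
      have h2 := x.2.2.isLt
      have h3 : (k : ℕ) ≤ 1 := by omega
      have h4 : (x.1 : ℕ) ≤ n := by omega
      have h5 : n + 1 - (x.1 : ℕ) = (n - (x.1 : ℕ)) + 1 := by omega
      rw [h1, h5, pow_succ]
      nlinarith [pow_pos (show (0:ℕ) < 2 by norm_num) (n - (x.1 : ℕ))]⟩⟩

lemma embH_injective (n : ℕ) (k : Fin 2) : Injective (embH n k) := by
  rintro ⟨i, a, b⟩ ⟨i', a', b'⟩ h
  rw [embH, embH, Sigma.mk.inj_iff] at h
  obtain ⟨h1, h2⟩ := h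
  have hi : i = i' := Fin.succ_injective _ h1
  subst hi
  rw [heq_iff_eq, Prod.mk.injEq] at h2
  obtain ⟨h3, h4⟩ := h2
  have ha : a = a' := by
    have := Fin.val_eq_of_eq h3
    simp only at this
    exact Fin.ext (by omega)
  have hb : b = b' := by
    have := Fin.val_eq_of_eq h4
    simp only at this
    exact Fin.ext this
  rw [ha, hb]

lemma embV_injective (n : ℕ) (k : Fin 2) : Injective (embV n k) := by
  rintro ⟨i, a, b⟩ ⟨i', a', b'⟩ h
  rw [embV, embV, Sigma.mk.inj_iff] at h
  obtain ⟨h1, h2⟩ := h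
  have hi : i = i' := Fin.castSucc_injective _ h1
  subst hi
  rw [heq_iff_eq, Prod.mk.injEq] at h2
  obtain ⟨h3, h4⟩ := h2
  have hb : b = b' := by
    have := Fin.val_eq_of_eq h4
    simp only at this
    exact Fin.ext (by omega)
  have ha : a = a' := by
    have := Fin.val_eq_of_eq h3
    simp only at this
    exact Fin.ext this
  rw [ha, hb]

lemma embH_disjoint (n : ℕ) : ∀ x y : TileIndex n, embH n 0 x ≠ embH n 1 y := by
  rintro ⟨i, a, b⟩ ⟨i', a', b'⟩ h
  rw [embH, embH, Sigma.mk.inj_iff] at h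
  obtain ⟨h1, h2⟩ := h
  have hi : i = i' := Fin.succ_injective _ h1
  subst hi
  rw [heq_iff_eq, Prod.mk.injEq] at h2
  have := Fin.val_eq_of_eq h2.1
  simp only [Fin.val_zero, Fin.val_one] at this
  have := a.isLt
  omega

lemma embV_disjoint (n : ℕ) : ∀ x y : TileIndex n, embV n 0 x ≠ embV n 1 y := by
  rintro ⟨i, a, b⟩ ⟨i', a', b'⟩ h
  rw [embV, embV, Sigma.mk.inj_iff] at h
  obtain ⟨h1, h2⟩ := h
  have hi : i = i' := Fin.castSucc_injective _ h1
  subst hi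
  rw [heq_iff_eq, Prod.mk.injEq] at h2
  have := Fin.val_eq_of_eq h2.2
  simp only [Fin.val_zero, Fin.val_one] at this
  have := b.isLt
  omega

lemma isDyadicTile_tileOf (m : ℕ) (x : TileIndex m) : IsDyadicTile m (tileOf m x) :=
  ⟨(x.1 : ℕ), m - (x.1 : ℕ), (x.2.1 : ℕ), (x.2.2 : ℕ),
    by have := x.1.isLt; omega, x.2.1.isLt, x.2.2.isLt, rfl⟩

lemma isDyadicTile_mem_range {m : ℕ} {t : Set (ℝ × ℝ)} (h : IsDyadicTile m t) :
    t ∈ Set.range (tileOf m) := by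
  obtain ⟨i, j, a, b, hij, ha, hb, rfl⟩ := h
  have him : i < m + 1 := by omega
  have hmi : m - i = j := by omega
  refine ⟨⟨⟨i, him⟩, ⟨a, ha⟩, ⟨b, by rw [show m - ((⟨i, him⟩ : Fin (m+1)) : ℕ) = j from hmi]; exact hb⟩⟩, ?_⟩
  show dyadicTile i (m - i) a b = dyadicTile i j a b
  rw [hmi]

lemma tiles_finite {m : ℕ} {F : Set (Set (ℝ × ℝ))} (h : ∀ t ∈ F, IsDyadicTile m t) :
    F.Finite :=
  Set.Finite.subset (Set.finite_range (tileOf m)) fun t ht => isDyadicTile_mem_range (h t ht)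

lemma isClosed_of_dyadic {m : ℕ} {t : Set (ℝ × ℝ)} (h : IsDyadicTile m t) : IsClosed t := by
  obtain ⟨i, j, a, b, -, -, -, rfl⟩ := h
  exact IsClosed.prod isClosed_Icc isClosed_Icc

-- ### halves and rescaling homeomorphisms

def hHalf (k : ℕ) : Set (ℝ × ℝ) :=
  Set.Icc ((k : ℝ) / 2) (((k : ℝ) + 1) / 2) ×ˢ Set.Icc (0 : ℝ) 1

def vHalf (k : ℕ) : Set (ℝ × ℝ) :=
  Set.Icc (0 : ℝ) 1 ×ˢ Set.Icc ((k : ℝ) / 2) (((k : ℝ) + 1) / 2)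

def aff (k : ℝ) : ℝ ≃ₜ ℝ :=
  (Homeomorph.mulLeft₀ 2 two_ne_zero).trans (Homeomorph.addRight (-k))

lemma aff_apply (k x : ℝ) : aff k x = 2 * x + -k := rfl

lemma aff_image_Icc (k u v : ℝ) (huv : u ≤ v) :
    aff k '' Set.Icc u v = Set.Icc (2 * u + -k) (2 * v + -k) := by
  have h1 : (aff k : ℝ → ℝ) = (fun x => x + -k) ∘ (fun x => 2 * x) := rfl
  rw [h1, Set.image_comp, Set.image_mul_left_Icc' (show (0:ℝ) < 2 by norm_num),
    Set.image_add_const_Icc]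

def EH (k : ℝ) : (ℝ × ℝ) ≃ₜ (ℝ × ℝ) := (aff k).prodCongr (Homeomorph.refl ℝ)
def EV (k : ℝ) : (ℝ × ℝ) ≃ₜ (ℝ × ℝ) := (Homeomorph.refl ℝ).prodCongr (aff k)

lemma EH_image_prod (k : ℝ) (s t : Set ℝ) : EH k '' (s ×ˢ t) = (aff k '' s) ×ˢ t := by
  rw [show (EH k '' (s ×ˢ t)) = (fun p : ℝ × ℝ => (aff k p.1, id p.2)) '' (s ×ˢ t) from rfl,
    ← Set.prod_image_image_eq, Set.image_id]

lemma EV_image_prod (k : ℝ) (s t : Set ℝ) : EV k '' (s ×ˢ t) = s ×ˢ (aff k '' t) := by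
  rw [show (EV k '' (s ×ˢ t)) = (fun p : ℝ × ℝ => (id p.1, aff k p.2)) '' (s ×ˢ t) from rfl,
    ← Set.prod_image_image_eq, Set.image_id]

lemma image_tile_H (k i j a b : ℕ) (hk : k ≤ 1) :
    EH (k : ℝ) '' dyadicTile (i + 1) j (a + k * 2 ^ i) b = dyadicTile i j a b := by
  have hle : ((a + k * 2 ^ i : ℕ) : ℝ) / 2 ^ (i+1) ≤ (((a + k * 2 ^ i : ℕ) : ℝ) + 1) / 2 ^ (i+1) := by
    apply div_le_div_of_nonneg_right ?_ (by positivity)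
    linarith
  rw [dyadicTile, EH_image_prod, aff_image_Icc _ _ _ hle, dyadicTile]
  have h2 : (2:ℝ) ^ (i+1) = 2 * 2 ^ i := by ring
  congr 2 <;> (push_cast; rw [h2]; field_simp; try ring)

lemma image_tile_V (k i j a b : ℕ) (hk : k ≤ 1) :
    EV (k : ℝ) '' dyadicTile i (j + 1) a (b + k * 2 ^ j) = dyadicTile i j a b := by
  have hle : ((b + k * 2 ^ j : ℕ) : ℝ) / 2 ^ (j+1) ≤ (((b + k * 2 ^ j : ℕ) : ℝ) + 1) / 2 ^ (j+1) := by
    apply div_le_div_of_nonneg_right ?_ (by positivity)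
    linarith
  rw [dyadicTile, EV_image_prod, aff_image_Icc _ _ _ hle, dyadicTile]
  have h2 : (2:ℝ) ^ (j+1) = 2 * 2 ^ j := by ring
  congr 2 <;> (push_cast; rw [h2]; field_simp; try ring)

lemma image_half_H (k : ℕ) : EH (k : ℝ) '' hHalf k = unitSquare := by
  rw [hHalf, EH_image_prod, aff_image_Icc _ _ _ (by linarith), unitSquare]
  congr 2 <;> ring

lemma image_half_V (k : ℕ) : EV (k : ℝ) '' vHalf k = unitSquare := by
  rw [vHalf, EV_image_prod, aff_image_Icc _ _ _ (by linarith), unitSquare]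
  congr 2 <;> ring

-- ### which half a tile lies in

lemma interval_unit (i a : ℕ) (ha : a < 2 ^ i) :
    Set.Icc ((a : ℝ) / 2 ^ i) (((a : ℝ) + 1) / 2 ^ i) ⊆ Set.Icc (0 : ℝ) 1 := by
  have h1 : ((a : ℝ) + 1) ≤ 2 ^ i := by exact_mod_cast Nat.succ_le_of_lt ha
  apply Set.Icc_subset_Icc (by positivity)
  rw [div_le_one (by positivity)]
  exact h1

lemma interval_half (i a : ℕ) (ha : a < 2 ^ (i + 1)) :
    Set.Icc ((a : ℝ) / 2 ^ (i + 1)) (((a : ℝ) + 1) / 2 ^ (i + 1)) ⊆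
      Set.Icc (((0:ℕ) : ℝ) / 2) ((((0:ℕ) : ℝ) + 1) / 2) ∨
    Set.Icc ((a : ℝ) / 2 ^ (i + 1)) (((a : ℝ) + 1) / 2 ^ (i + 1)) ⊆
      Set.Icc (((1:ℕ) : ℝ) / 2) ((((1:ℕ) : ℝ) + 1) / 2) := by
  have hpow : (0:ℝ) < 2 ^ (i + 1) := by positivity
  have h2 : (2:ℝ) ^ (i + 1) = 2 * 2 ^ i := by ring
  rcases lt_or_ge a (2 ^ i) with h | h
  · left
    have hc : ((a : ℝ) + 1) ≤ 2 ^ i := by exact_mod_cast Nat.succ_le_of_lt h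
    apply Set.Icc_subset_Icc
    · rw [div_le_div_iff₀ (by norm_num) hpow]
      push_cast
      nlinarith [Nat.cast_nonneg (α := ℝ) a, hpow]
    · rw [div_le_div_iff₀ hpow (by norm_num)]
      push_cast
      linarith
  · right
    have hc : (2:ℝ) ^ i ≤ (a : ℝ) := by exact_mod_cast h
    have hc2 : ((a : ℝ) + 1) ≤ 2 ^ (i + 1) := by
      exact_mod_cast Nat.succ_le_of_lt ha
    apply Set.Icc_subset_Icc
    · rw [div_le_div_iff₀ (by norm_num) hpow]
      push_cast
      linarith
    · rw [div_le_div_iff₀ hpow (by norm_num)]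
      push_cast
      linarith

lemma tile_in_half_H (i j a b : ℕ) (ha : a < 2 ^ (i + 1)) (hb : b < 2 ^ j) :
    dyadicTile (i + 1) j a b ⊆ hHalf 0 ∨ dyadicTile (i + 1) j a b ⊆ hHalf 1 := by
  rcases interval_half i a ha with h | h
  · exact Or.inl (Set.prod_mono h (interval_unit j b hb))
  · exact Or.inr (Set.prod_mono h (interval_unit j b hb))

lemma tile_in_half_V (i j a b : ℕ) (ha : a < 2 ^ i) (hb : b < 2 ^ (j + 1)) :
    dyadicTile i (j + 1) a b ⊆ vHalf 0 ∨ dyadicTile i (j + 1) a b ⊆ vHalf 1 := by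
  rcases interval_half j b hb with h | h
  · exact Or.inl (Set.prod_mono (interval_unit i a ha) h)
  · exact Or.inr (Set.prod_mono (interval_unit i a ha) h)

-- ### full-width and full-height tiles overlap

lemma overlap (m a b : ℕ) (ha : a < 2 ^ m) (hb : b < 2 ^ m) :
    (interior (dyadicTile 0 m 0 b) ∩ interior (dyadicTile m 0 a 0)).Nonempty := by
  have hpow : (0:ℝ) < 2 ^ m := by positivity
  have key : ∀ c : ℕ, c < 2 ^ m →
      ((c:ℝ)/2^m < ((c:ℝ) + 2⁻¹)/2^m ∧ ((c:ℝ) + 2⁻¹)/2^m < ((c:ℝ)+1)/2^m) ∧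
      (0 < ((c:ℝ) + 2⁻¹)/2^m ∧ ((c:ℝ) + 2⁻¹)/2^m < 1) := by
    intro c hc
    have hcc : ((c:ℝ) + 1) ≤ 2 ^ m := by exact_mod_cast Nat.succ_le_of_lt hc
    refine ⟨⟨?_, ?_⟩, ?_, ?_⟩
    · rw [div_lt_div_iff₀ hpow hpow]; nlinarith
    · rw [div_lt_div_iff₀ hpow hpow]; nlinarith
    · positivity
    · rw [div_lt_one hpow]; nlinarith
  obtain ⟨⟨ha1, ha2⟩, ha3, ha4⟩ := key a ha
  obtain ⟨⟨hb1, hb2⟩, hb3, hb4⟩ := key b hb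
  have e : Set.Ioo ((((0:ℕ)):ℝ)/2^(0:ℕ)) (((((0:ℕ)):ℝ)+1)/2^(0:ℕ)) = Set.Ioo (0:ℝ) 1 := by
    norm_num
  refine ⟨(((a:ℝ) + 2⁻¹) / 2 ^ m, ((b:ℝ) + 2⁻¹) / 2 ^ m), ?_, ?_⟩
  · rw [dyadicTile, interior_prod_eq, interior_Icc, interior_Icc, e]
    exact ⟨⟨ha3, ha4⟩, hb1, hb2⟩
  · rw [dyadicTile, interior_prod_eq, interior_Icc, interior_Icc, e]
    exact ⟨⟨ha1, ha2⟩, hb3, hb4⟩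

lemma fullwidth_ne_fullheight (m a b : ℕ) (hm : 1 ≤ m) (hb : b < 2 ^ m) :
    dyadicTile 0 m 0 b ≠ dyadicTile m 0 a 0 := by
  intro h
  have hpow : (0:ℝ) < 2 ^ m := by positivity
  have hb1 : (b:ℝ)/2^m ≤ ((b:ℝ)+1)/2^m := by
    rw [div_le_div_iff_of_pos_right hpow]
    linarith
  have hx01 : (0:ℝ) ∈ Set.Icc ((((0:ℕ)):ℝ)/2^(0:ℕ)) (((((0:ℕ)):ℝ)+1)/2^(0:ℕ)) := by
    norm_num
  have hx11 : (1:ℝ) ∈ Set.Icc ((((0:ℕ)):ℝ)/2^(0:ℕ)) (((((0:ℕ)):ℝ)+1)/2^(0:ℕ)) := by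
    norm_num
  have h0 : ((0:ℝ), (b:ℝ)/2^m) ∈ dyadicTile 0 m 0 b :=
    ⟨hx01, Set.left_mem_Icc.mpr hb1⟩
  have h1 : ((1:ℝ), (b:ℝ)/2^m) ∈ dyadicTile 0 m 0 b :=
    ⟨hx11, Set.left_mem_Icc.mpr hb1⟩
  rw [h] at h0 h1
  have hx0 : (a:ℝ)/2^m ≤ 0 := h0.1.1
  have hx1 : (1:ℝ) ≤ ((a:ℝ)+1)/2^m := h1.1.2
  rw [div_le_iff₀ hpow] at hx0
  rw [le_div_iff₀ hpow] at hx1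
  have hA : (a:ℝ) ≤ 0 := by linarith [hpow]
  have hB : (2:ℝ)^m ≤ 1 := by nlinarith
  have hBn : (2:ℕ)^m ≤ 1 := by exact_mod_cast hB
  have := Nat.one_lt_two_pow_iff.mpr (by omega : m ≠ 0)
  omega

lemma crossing (n : ℕ) (F : Set (Set (ℝ × ℝ))) (hT : IsTiling (n + 1) F unitSquare) :
    (∀ t ∈ F, t ⊆ hHalf 0 ∨ t ⊆ hHalf 1) ∨ (∀ t ∈ F, t ⊆ vHalf 0 ∨ t ⊆ vHalf 1) := by
  by_cases hE : ∃ b, b < 2 ^ (n + 1) ∧ dyadicTile 0 (n + 1) 0 b ∈ F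
  · right
    intro t ht
    obtain ⟨i, j, a, b, hij, ha, hb, rfl⟩ := hT.1 t ht
    rcases Nat.eq_zero_or_pos j with hj | hj
    · exfalso
      subst hj
      obtain rfl : i = n + 1 := by omega
      obtain rfl : b = 0 := by simpa using hb
      obtain ⟨b0, hb0', hmem⟩ := hE
      have hne := fullwidth_ne_fullheight (n + 1) a b0 (by omega) hb0'
      have hdisj := hT.2.2 hmem ht hne
      obtain ⟨z, hz⟩ := overlap (n + 1) a b0 ha hb0'
      rw [hdisj] at hz
      exact absurd hz (Set.notMem_empty z)
    · obtain ⟨j', rfl⟩ : ∃ j', j = j' + 1 := ⟨j - 1, by omega⟩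
      exact tile_in_half_V i j' a b ha hb
  · left
    intro t ht
    obtain ⟨i, j, a, b, hij, ha, hb, rfl⟩ := hT.1 t ht
    rcases Nat.eq_zero_or_pos i with hi | hi
    · exfalso
      subst hi
      obtain rfl : a = 0 := by simpa using ha
      obtain rfl : j = n + 1 := by omega
      exact hE ⟨b, hb, ht⟩
    · obtain ⟨i', rfl⟩ : ∃ i', i = i' + 1 := ⟨i - 1, by omega⟩
      exact tile_in_half_H i' j a b ha hb

lemma sUnion_half_H (n : ℕ) (F : Set (Set (ℝ × ℝ))) (hT : IsTiling (n + 1) F unitSquare)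
    (hsplit : ∀ t ∈ F, t ⊆ hHalf 0 ∨ t ⊆ hHalf 1) (k : Fin 2) :
    ⋃₀ {t | t ∈ F ∧ t ⊆ hHalf (k : ℕ)} = hHalf (k : ℕ) := by
  have hk : (k : ℕ) ≤ 1 := by omega
  have hkR : ((k : ℕ) : ℝ) ≤ 1 := by exact_mod_cast hk
  have hkR0 : (0:ℝ) ≤ ((k : ℕ) : ℝ) := by positivity
  apply subset_antisymm
  · exact Set.sUnion_subset fun t ht => ht.2
  · have hfin : Set.Finite {t | t ∈ F ∧ t ⊆ hHalf (k : ℕ)} :=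
      (tiles_finite hT.1).subset fun t ht => ht.1
    have hcl : IsClosed (⋃₀ {t | t ∈ F ∧ t ⊆ hHalf (k : ℕ)}) := by
      rw [Set.sUnion_eq_biUnion]
      exact hfin.isClosed_biUnion fun t ht => isClosed_of_dyadic (hT.1 t ht.1)
    have hUsub : Set.Ioo (((k : ℕ):ℝ)/2) ((((k : ℕ):ℝ)+1)/2) ×ˢ Set.Icc (0:ℝ) 1 ⊆
        ⋃₀ {t | t ∈ F ∧ t ⊆ hHalf (k : ℕ)} := by
      rintro ⟨x, y⟩ ⟨hx, hy⟩
      rw [Set.mem_Ioo] at hx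
      have hz : (x, y) ∈ unitSquare := by
        refine ⟨Set.mem_Icc.mpr ⟨by linarith [hx.1], by linarith [hx.2]⟩, hy⟩
      rw [← hT.2.1] at hz
      obtain ⟨t, htF, hzt⟩ := hz
      have hk2 : (k : ℕ) = 0 ∨ (k : ℕ) = 1 := by omega
      rcases hsplit t htF with h0 | h1
      · rcases hk2 with hk0 | hk1
        · exact ⟨t, ⟨htF, by rw [hk0]; exact h0⟩, hzt⟩
        · exfalso
          have := (h0 hzt).1.2
          simp only [hHalf] at this
          rw [hk1] at hx
          push_cast at this hx
          linarith [hx.1]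
      · rcases hk2 with hk0 | hk1
        · exfalso
          have := (h1 hzt).1.1
          simp only [hHalf] at this
          rw [hk0] at hx
          push_cast at this hx
          linarith [hx.2]
        · exact ⟨t, ⟨htF, by rw [hk1]; exact h1⟩, hzt⟩
    have hclos : hHalf (k : ℕ) =
        closure (Set.Ioo (((k : ℕ):ℝ)/2) ((((k : ℕ):ℝ)+1)/2) ×ˢ Set.Icc (0:ℝ) 1) := by
      rw [closure_prod_eq, closure_Ioo (ne_of_lt (by linarith : ((k : ℕ):ℝ)/2 < (((k : ℕ):ℝ)+1)/2)),
        closure_Icc, hHalf]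
    have hfinal := closure_minimal hUsub hcl
    rw [← hclos] at hfinal
    exact hfinal

lemma sUnion_half_V (n : ℕ) (F : Set (Set (ℝ × ℝ))) (hT : IsTiling (n + 1) F unitSquare)
    (hsplit : ∀ t ∈ F, t ⊆ vHalf 0 ∨ t ⊆ vHalf 1) (k : Fin 2) :
    ⋃₀ {t | t ∈ F ∧ t ⊆ vHalf (k : ℕ)} = vHalf (k : ℕ) := by
  have hk : (k : ℕ) ≤ 1 := by omega
  have hkR : ((k : ℕ) : ℝ) ≤ 1 := by exact_mod_cast hk
  have hkR0 : (0:ℝ) ≤ ((k : ℕ) : ℝ) := by positivity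
  apply subset_antisymm
  · exact Set.sUnion_subset fun t ht => ht.2
  · have hfin : Set.Finite {t | t ∈ F ∧ t ⊆ vHalf (k : ℕ)} :=
      (tiles_finite hT.1).subset fun t ht => ht.1
    have hcl : IsClosed (⋃₀ {t | t ∈ F ∧ t ⊆ vHalf (k : ℕ)}) := by
      rw [Set.sUnion_eq_biUnion]
      exact hfin.isClosed_biUnion fun t ht => isClosed_of_dyadic (hT.1 t ht.1)
    have hUsub : Set.Icc (0:ℝ) 1 ×ˢ Set.Ioo (((k : ℕ):ℝ)/2) ((((k : ℕ):ℝ)+1)/2) ⊆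
        ⋃₀ {t | t ∈ F ∧ t ⊆ vHalf (k : ℕ)} := by
      rintro ⟨x, y⟩ ⟨hx, hy⟩
      rw [Set.mem_Ioo] at hy
      have hz : (x, y) ∈ unitSquare := by
        refine ⟨hx, Set.mem_Icc.mpr ⟨by linarith [hy.1], by linarith [hy.2]⟩⟩
      rw [← hT.2.1] at hz
      obtain ⟨t, htF, hzt⟩ := hz
      have hk2 : (k : ℕ) = 0 ∨ (k : ℕ) = 1 := by omega
      rcases hsplit t htF with h0 | h1
      · rcases hk2 with hk0 | hk1
        · exact ⟨t, ⟨htF, by rw [hk0]; exact h0⟩, hzt⟩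
        · exfalso
          have := (h0 hzt).2.2
          simp only [vHalf] at this
          rw [hk1] at hy
          push_cast at this hy
          linarith [hy.1]
      · rcases hk2 with hk0 | hk1
        · exfalso
          have := (h1 hzt).2.1
          simp only [vHalf] at this
          rw [hk0] at hy
          push_cast at this hy
          linarith [hy.2]
        · exact ⟨t, ⟨htF, by rw [hk1]; exact h1⟩, hzt⟩
    have hclos : vHalf (k : ℕ) =
        closure (Set.Icc (0:ℝ) 1 ×ˢ Set.Ioo (((k : ℕ):ℝ)/2) ((((k : ℕ):ℝ)+1)/2)) := by
      rw [closure_prod_eq, closure_Ioo (ne_of_lt (by linarith : ((k : ℕ):ℝ)/2 < (((k : ℕ):ℝ)+1)/2)),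
        closure_Icc, vHalf]
    have hfinal := closure_minimal hUsub hcl
    rw [← hclos] at hfinal
    exact hfinal

lemma interval_le (i c : ℕ) : (c:ℝ)/2^i ≤ ((c:ℝ)+1)/2^i := by
  rw [div_le_div_iff_of_pos_right (by positivity)]
  linarith

lemma corner_ll (i j a b : ℕ) : ((a:ℝ)/2^i, (b:ℝ)/2^j) ∈ dyadicTile i j a b :=
  ⟨Set.left_mem_Icc.mpr (interval_le i a), Set.left_mem_Icc.mpr (interval_le j b)⟩

lemma corner_rl (i j a b : ℕ) : (((a:ℝ)+1)/2^i, (b:ℝ)/2^j) ∈ dyadicTile i j a b :=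
  ⟨Set.right_mem_Icc.mpr (interval_le i a), Set.left_mem_Icc.mpr (interval_le j b)⟩

lemma corner_lr (i j a b : ℕ) : ((a:ℝ)/2^i, ((b:ℝ)+1)/2^j) ∈ dyadicTile i j a b :=
  ⟨Set.left_mem_Icc.mpr (interval_le i a), Set.right_mem_Icc.mpr (interval_le j b)⟩

lemma mk_eq (m u u' v v' w w' : ℕ) (hu : u < m+1) (hu' : u' < m+1)
    (hv : v < 2^u) (hv' : v' < 2^u') (hw : w < 2^(m-u)) (hw' : w' < 2^(m-u'))
    (h1 : u = u') (h2 : v = v') (h3 : w = w') :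
    (⟨⟨u, hu⟩, ⟨v, hv⟩, ⟨w, hw⟩⟩ : TileIndex m) = ⟨⟨u', hu'⟩, ⟨v', hv'⟩, ⟨w', hw'⟩⟩ := by
  subst h1; subst h2; subst h3; rfl

open Classical in
lemma half_to_square_H (n : ℕ) (k : Fin 2) (S : Finset (TileIndex (n+1)))
    (FL : Set (Set (ℝ × ℝ)))
    (havl : ∀ t ∈ FL, ∃ x ∈ S, t = tileOf (n+1) x)
    (hU : ⋃₀ FL = hHalf (k : ℕ))
    (hPw : FL.Pairwise fun s t => interior s ∩ interior t = ∅) :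
    TileableSquare n (pre (embH n k) S) := by
  have hk : (k : ℕ) ≤ 1 := by omega
  set E := EH (((k:ℕ)) : ℝ) with hEdef
  have key : ∀ t ∈ FL, ∃ y ∈ pre (embH n k) S, E '' t = tileOf n y := by
    intro t ht
    obtain ⟨x, hxS, rfl⟩ := havl t ht
    obtain ⟨⟨iv, hiv⟩, ⟨av, hav2⟩, ⟨bv, hbv2⟩⟩ := x
    have htsub : dyadicTile iv (n+1-iv) av bv ⊆ hHalf (k:ℕ) := by
      rw [← hU]
      exact Set.subset_sUnion_of_mem ht
    have hpow : (0:ℝ) < 2^iv := by positivity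
    have c1 : (((k:ℕ)):ℝ)/2 ≤ (av:ℝ)/2^iv := (htsub (corner_ll iv (n+1-iv) av bv)).1.1
    have c2 : ((av:ℝ)+1)/2^iv ≤ ((((k:ℕ)):ℝ)+1)/2 := (htsub (corner_rl iv (n+1-iv) av bv)).1.2
    rw [div_le_div_iff₀ (by norm_num) hpow] at c1
    rw [div_le_div_iff₀ hpow (by norm_num)] at c2
    have n1 : (k:ℕ) * 2^iv ≤ av * 2 := by exact_mod_cast c1
    have n2 : (av + 1) * 2 ≤ ((k:ℕ)+1) * 2^iv := by exact_mod_cast c2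
    have hk2 : (k:ℕ) = 0 ∨ (k:ℕ) = 1 := by omega
    cases iv with
    | zero =>
      exfalso
      simp only [pow_zero] at n1 n2 hav2
      omega
    | succ i =>
      have hi_le : i < n + 1 := by omega
      have h2 : (2:ℕ)^(i+1) = 2 * 2^i := by ring
      rw [h2] at n1 n2
      have hbound1 : (k:ℕ) * 2^i ≤ av := by rcases hk2 with h | h <;> rw [h] at n1 ⊢ <;> omega
      have hbound2 : av + 1 ≤ ((k:ℕ)+1) * 2^i := by
        rcases hk2 with h | h <;> rw [h] at n2 ⊢ <;> omega
      have ha_lt : av - (k:ℕ) * 2^i < 2^i := by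
        rcases hk2 with h | h <;> rw [h] at hbound1 hbound2 ⊢ <;> omega
      have haval : av = (av - (k:ℕ) * 2^i) + (k:ℕ) * 2^i := by omega
      have hblt : bv < 2^(n - i) := by
        have he : n + 1 - (i+1) = n - i := by omega
        rw [← he]
        exact hbv2
      refine ⟨⟨⟨i, hi_le⟩, ⟨av - (k:ℕ) * 2^i, ha_lt⟩, ⟨bv, hblt⟩⟩, ?_, ?_⟩
      · rw [mem_pre]
        have hemb : embH n k ⟨⟨i, hi_le⟩, ⟨av - (k:ℕ) * 2^i, ha_lt⟩, ⟨bv, hblt⟩⟩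
            = ⟨⟨i+1, hiv⟩, ⟨av, hav2⟩, ⟨bv, hbv2⟩⟩ :=
          mk_eq (n+1) _ _ _ _ _ _ _ _ _ _ _ _ rfl
            (by show (av - (k:ℕ) * 2^i) + (k:ℕ) * 2^i = av; omega) rfl
        rw [hemb]
        exact hxS
      · have ht1 : tileOf (n+1) ⟨⟨i+1, hiv⟩, ⟨av, hav2⟩, ⟨bv, hbv2⟩⟩
            = dyadicTile (i+1) (n-i) ((av - (k:ℕ) * 2^i) + (k:ℕ)*2^i) bv := by
          show dyadicTile (i+1) (n+1-(i+1)) av bv = _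
          rw [show n + 1 - (i+1) = n - i from by omega, ← haval]
        rw [ht1, image_tile_H (k:ℕ) i (n-i) (av - (k:ℕ) * 2^i) bv hk]
        rfl
  refine ⟨(fun t => E '' t) '' FL, ?_, ?_, ?_, ?_⟩
  · rintro t' ⟨t, ht, rfl⟩
    obtain ⟨y, hy, hEt⟩ := key t ht
    exact ⟨y, hy, hEt⟩
  · rintro t' ⟨t, ht, rfl⟩
    obtain ⟨y, hy, hEt⟩ := key t ht
    show IsDyadicTile n (E '' t)
    rw [hEt]
    exact isDyadicTile_tileOf n y
  · rw [Set.sUnion_image, ← Set.image_iUnion₂, ← Set.sUnion_eq_biUnion, hU]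
    exact image_half_H (k:ℕ)
  · rintro t1' ⟨t1, ht1, rfl⟩ t2' ⟨t2, ht2, rfl⟩ hne
    have hne' : t1 ≠ t2 := by rintro rfl; exact hne rfl
    have hdisj := hPw ht1 ht2 hne'
    rw [← Homeomorph.image_interior, ← Homeomorph.image_interior,
      ← Set.image_inter E.injective, hdisj, Set.image_empty]

open Classical in
lemma half_to_square_V (n : ℕ) (k : Fin 2) (S : Finset (TileIndex (n+1)))
    (FL : Set (Set (ℝ × ℝ)))
    (havl : ∀ t ∈ FL, ∃ x ∈ S, t = tileOf (n+1) x)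
    (hU : ⋃₀ FL = vHalf (k : ℕ))
    (hPw : FL.Pairwise fun s t => interior s ∩ interior t = ∅) :
    TileableSquare n (pre (embV n k) S) := by
  have hk : (k : ℕ) ≤ 1 := by omega
  set E := EV (((k:ℕ)) : ℝ) with hEdef
  have key : ∀ t ∈ FL, ∃ y ∈ pre (embV n k) S, E '' t = tileOf n y := by
    intro t ht
    obtain ⟨x, hxS, rfl⟩ := havl t ht
    obtain ⟨⟨iv, hiv⟩, ⟨av, hav2⟩, ⟨bv, hbv2⟩⟩ := x
    have htsub : dyadicTile iv (n+1-iv) av bv ⊆ vHalf (k:ℕ) := by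
      rw [← hU]
      exact Set.subset_sUnion_of_mem ht
    have hpow : (0:ℝ) < 2^(n+1-iv) := by positivity
    have c1 : (((k:ℕ)):ℝ)/2 ≤ (bv:ℝ)/2^(n+1-iv) := (htsub (corner_ll iv (n+1-iv) av bv)).2.1
    have c2 : ((bv:ℝ)+1)/2^(n+1-iv) ≤ ((((k:ℕ)):ℝ)+1)/2 :=
      (htsub (corner_lr iv (n+1-iv) av bv)).2.2
    rw [div_le_div_iff₀ (by norm_num) hpow] at c1
    rw [div_le_div_iff₀ hpow (by norm_num)] at c2
    have n1 : (k:ℕ) * 2^(n+1-iv) ≤ bv * 2 := by exact_mod_cast c1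
    have n2 : (bv + 1) * 2 ≤ ((k:ℕ)+1) * 2^(n+1-iv) := by exact_mod_cast c2
    have hk2 : (k:ℕ) = 0 ∨ (k:ℕ) = 1 := by omega
    rcases Nat.lt_or_ge iv (n+1) with hlt | hge
    · have hj : n + 1 - iv = (n - iv) + 1 := by omega
      rw [hj] at n1 n2
      have h2 : (2:ℕ)^((n-iv)+1) = 2 * 2^(n-iv) := by ring
      rw [h2] at n1 n2
      have hbound1 : (k:ℕ) * 2^(n-iv) ≤ bv := by
        rcases hk2 with h | h <;> rw [h] at n1 ⊢ <;> omega
      have hbound2 : bv + 1 ≤ ((k:ℕ)+1) * 2^(n-iv) := by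
        rcases hk2 with h | h <;> rw [h] at n2 ⊢ <;> omega
      have hb_lt : bv - (k:ℕ) * 2^(n-iv) < 2^(n-iv) := by
        rcases hk2 with h | h <;> rw [h] at hbound1 hbound2 ⊢ <;> omega
      have hbval : bv = (bv - (k:ℕ) * 2^(n-iv)) + (k:ℕ) * 2^(n-iv) := by omega
      refine ⟨⟨⟨iv, hlt⟩, ⟨av, hav2⟩, ⟨bv - (k:ℕ) * 2^(n-iv), hb_lt⟩⟩, ?_, ?_⟩
      · rw [mem_pre]
        have hemb : embV n k ⟨⟨iv, hlt⟩, ⟨av, hav2⟩, ⟨bv - (k:ℕ) * 2^(n-iv), hb_lt⟩⟩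
            = ⟨⟨iv, hiv⟩, ⟨av, hav2⟩, ⟨bv, hbv2⟩⟩ :=
          mk_eq (n+1) _ _ _ _ _ _ _ _ _ _ _ _ rfl rfl
            (by show (bv - (k:ℕ) * 2^(n-iv)) + (k:ℕ) * 2^(n-iv) = bv; omega)
        rw [hemb]
        exact hxS
      · have ht1 : tileOf (n+1) ⟨⟨iv, hiv⟩, ⟨av, hav2⟩, ⟨bv, hbv2⟩⟩
            = dyadicTile iv ((n-iv)+1) av ((bv - (k:ℕ) * 2^(n-iv)) + (k:ℕ)*2^(n-iv)) := by
          show dyadicTile iv (n+1-iv) av bv = _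
          rw [hj, ← hbval]
        rw [ht1, image_tile_V (k:ℕ) iv (n-iv) av (bv - (k:ℕ) * 2^(n-iv)) hk]
        rfl
    · exfalso
      have hj0 : n + 1 - iv = 0 := by omega
      rw [hj0, pow_zero] at n1 n2
      omega
  refine ⟨(fun t => E '' t) '' FL, ?_, ?_, ?_, ?_⟩
  · rintro t' ⟨t, ht, rfl⟩
    obtain ⟨y, hy, hEt⟩ := key t ht
    exact ⟨y, hy, hEt⟩
  · rintro t' ⟨t, ht, rfl⟩
    obtain ⟨y, hy, hEt⟩ := key t ht
    show IsDyadicTile n (E '' t)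
    rw [hEt]
    exact isDyadicTile_tileOf n y
  · rw [Set.sUnion_image, ← Set.image_iUnion₂, ← Set.sUnion_eq_biUnion, hU]
    exact image_half_V (k:ℕ)
  · rintro t1' ⟨t1, ht1, rfl⟩ t2' ⟨t2, ht2, rfl⟩ hne
    have hne' : t1 ≠ t2 := by rintro rfl; exact hne rfl
    have hdisj := hPw ht1 ht2 hne'
    rw [← Homeomorph.image_interior, ← Homeomorph.image_interior,
      ← Set.image_inter E.injective, hdisj, Set.image_empty]

open Classical in
lemma tileable_split (n : ℕ) (S : Finset (TileIndex (n+1))) (h : TileableSquare (n+1) S) :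
    (TileableSquare n (pre (embH n 0) S) ∧ TileableSquare n (pre (embH n 1) S)) ∨
    (TileableSquare n (pre (embV n 0) S) ∧ TileableSquare n (pre (embV n 1) S)) := by
  obtain ⟨F, hav, hT⟩ := h
  rcases crossing n F hT with hs | hs
  · left
    exact ⟨half_to_square_H n 0 S _ (fun t ht => hav t ht.1) (sUnion_half_H n F hT hs 0)
      (hT.2.2.mono fun t ht => ht.1),
      half_to_square_H n 1 S _ (fun t ht => hav t ht.1) (sUnion_half_H n F hT hs 1)
      (hT.2.2.mono fun t ht => ht.1)⟩
  · right
    exact ⟨half_to_square_V n 0 S _ (fun t ht => hav t ht.1) (sUnion_half_V n F hT hs 0)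
      (hT.2.2.mono fun t ht => ht.1),
      half_to_square_V n 1 S _ (fun t ht => hav t ht.1) (sUnion_half_V n F hT hs 1)
      (hT.2.2.mono fun t ht => ht.1)⟩

/-- `T_{n+1}(p) ≤ 2 T_n(p)²`. -/
theorem T_succ_le (n : ℕ) (p : ℝ) (hp : p ∈ Set.Icc (0 : ℝ) 1) :
    T (n + 1) p ≤ 2 * T n p ^ 2 := by
  obtain ⟨hp0, hp1⟩ := hp
  have hle := Pr_mono_or (n+1) hp0 hp1
    (E := TileableSquare (n+1))
    (A := fun S => TileableSquare n (pre (embH n 0) S) ∧ TileableSquare n (pre (embH n 1) S))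
    (B := fun S => TileableSquare n (pre (embV n 0) S) ∧ TileableSquare n (pre (embV n 1) S))
    (tileable_split n)
  have e1 := Pr_prod n p (embH n 0) (embH n 1) (embH_injective n 0) (embH_injective n 1)
    (embH_disjoint n) (TileableSquare n) (TileableSquare n)
  have e2 := Pr_prod n p (embV n 0) (embV n 1) (embV_injective n 0) (embV_injective n 1)
    (embV_disjoint n) (TileableSquare n) (TileableSquare n)
  rw [e1, e2] at hle
  have : T (n+1) p ≤ T n p * T n p + T n p * T n p := hle
  nlinarith [this]
end
end
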